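/- Let m ≥ 2, let A and B be disjoint sets of m vertices each in {1,…,p} (p ≥ 2m), and let G be the building-block graph whose edges are: all pairs within A, all pairs within B, and a fixed perfect matching of m edges between A and B, with no other edges. Then under the Ising distribution P_G, the probability that all vertices of A take a common value and all vertices of B take a common value satisfies P_G[X is constant on A and constant on B] ≥ 1 − 2m² / (m + e^{λ(m−1)/2}). -/

import Mathlib

open Real Finset
open scoped Classical

noncomputable section

/-- Value of a spin: `true ↦ +1`, `false ↦ -1`. -/
def confVal (b : Bool) : ℝ := if b then 1 else -1

/-- The Ising interaction `∑_{{i,j}∈E} x_i x_j` (each edge counted once). -/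
def isingEnergy {p : ℕ} (G : SimpleGraph (Fin p)) (x : Fin p → Bool) : ℝ :=
  (1 / 2) * ∑ i : Fin p, ∑ j : Fin p,
    if G.Adj i j then confVal (x i) * confVal (x j) else 0

/-- The partition function `Z_G`. -/
def isingZ {p : ℕ} (lam : ℝ) (G : SimpleGraph (Fin p)) : ℝ :=
  ∑ x : Fin p → Bool, Real.exp (lam * isingEnergy G x)

/-- The ferromagnetic Ising distribution `P_G(x)`. -/
def isingP {p : ℕ} (lam : ℝ) (G : SimpleGraph (Fin p)) (x : Fin p → Bool) : ℝ :=
  Real.exp (lam * isingEnergy G x) / isingZ lam G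

/-- Kullback–Leibler divergence `D(P_G ‖ P_{G'})`. -/
def isingKL {p : ℕ} (lam : ℝ) (G G' : SimpleGraph (Fin p)) : ℝ :=
  ∑ x : Fin p → Bool, isingP lam G x * Real.log (isingP lam G x / isingP lam G' x)

/-- The correlation `E_G[X_i X_j]`. -/
def isingCorr {p : ℕ} (lam : ℝ) (G : SimpleGraph (Fin p)) (i j : Fin p) : ℝ :=
  ∑ x : Fin p → Bool, isingP lam G x * (confVal (x i) * confVal (x j))

/-- Probability of an event under `P_G`. -/
def eventProb {p : ℕ} (lam : ℝ) (G : SimpleGraph (Fin p)) (S : Set (Fin p → Bool)) : ℝ :=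
  ∑ x : Fin p → Bool, if x ∈ S then isingP lam G x else 0

/-- `P_G[X_i = X_j]`. -/
def isingProbEq {p : ℕ} (lam : ℝ) (G : SimpleGraph (Fin p)) (i j : Fin p) : ℝ :=
  eventProb lam G {x | x i = x j}

/-- The edge set of `G` as a `Finset`. -/
def edgeFin {p : ℕ} (G : SimpleGraph (Fin p)) : Finset (Sym2 (Fin p)) :=
  (Set.toFinite G.edgeSet).toFinset

/-- The edit distance `|E Δ E'|` between two graphs. -/
def editDist {p : ℕ} (G G' : SimpleGraph (Fin p)) : ℕ :=
  ((edgeFin G \ edgeFin G') ∪ (edgeFin G' \ edgeFin G)).card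

/- ### Auxiliary lemmas -/

lemma confVal_mul_self (b : Bool) : confVal b * confVal b = 1 := by
  cases b <;> simp [confVal]

lemma confVal_mul_le_one (b c : Bool) : confVal b * confVal c ≤ 1 := by
  cases b <;> cases c <;> norm_num [confVal]

lemma sum_fun_bool_prod (m : ℕ) (g : Bool → ℝ) :
    ∑ u : Fin m → Bool, ∏ k, g (u k) = (g true + g false) ^ m := by
  induction m with
  | zero => simp
  | succ n ih =>
    rw [← (Fin.consEquiv (fun _ : Fin (n+1) => Bool)).sum_comp (fun u => ∏ k, g (u k))]
    rw [Fintype.sum_prod_type]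
    have h : ∀ (bu : Bool × (Fin n → Bool)), ∏ k, g ((Fin.consEquiv (fun _ : Fin (n+1) => Bool)) bu k)
        = g bu.1 * ∏ k : Fin n, g (bu.2 k) := by
      intro bu
      rw [Fin.prod_univ_succ]
      simp [Fin.consEquiv]
    simp only [h]
    rw [Fintype.sum_bool]
    simp only [← Finset.mul_sum, ih]
    ring

/-- The number of `true` coordinates. -/
def cnt {m : ℕ} (u : Fin m → Bool) : ℕ := (Finset.univ.filter (fun k => u k = true)).card

lemma cnt_le {m : ℕ} (u : Fin m → Bool) : cnt u ≤ m := by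
  calc cnt u ≤ (Finset.univ : Finset (Fin m)).card := Finset.card_filter_le _ _
  _ = m := by simp

lemma cnt_false (m : ℕ) : cnt (fun _ : Fin m => false) = 0 := by simp [cnt]

lemma cnt_true (m : ℕ) : cnt (fun _ : Fin m => true) = m := by simp [cnt]

lemma sum_confVal {m : ℕ} (u : Fin m → Bool) :
    ∑ k, confVal (u k) = 2 * (cnt u : ℝ) - m := by
  have h : ∀ k, confVal (u k) = (if u k = true then (2:ℝ) else 0) - 1 := by
    intro k; cases hk : u k <;> norm_num [confVal]
  rw [Finset.sum_congr rfl (fun k _ => h k), Finset.sum_sub_distrib]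
  rw [← Finset.sum_filter]
  simp [cnt, mul_comm]

lemma prod_q_cnt {m : ℕ} (q : ℝ) (u : Fin m → Bool) :
    ∏ k, (if u k then q else 1) = q ^ cnt u := by
  have h : ∀ k, (if u k then q else 1) = (if u k = true then q else 1) := by intro k; simp
  rw [Finset.prod_congr rfl (fun k _ => h k), ← Finset.prod_filter]
  simp [cnt]

lemma prod_q_cnt' {m : ℕ} (q : ℝ) (u : Fin m → Bool) :
    ∏ k, (if u k then 1 else q) = q ^ (m - cnt u) := by
  have h : ∀ k, (if u k then (1:ℝ) else q) = (if ¬(u k = true) then q else 1) := by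
    intro k; cases hk : u k <;> simp
  rw [Finset.prod_congr rfl (fun k _ => h k), ← Finset.prod_filter]
  rw [Finset.prod_const]
  congr 1
  have h2 := Finset.card_filter_add_card_filter_not (s := (Finset.univ : Finset (Fin m)))
    (p := fun k => u k = true)
  simp only [Finset.card_univ, Fintype.card_fin] at h2
  have h3 : cnt u + #(filter (fun k => ¬u k = true) univ) = m := by simpa [cnt] using h2
  omega

lemma exp_d_le (lam mr c : ℝ) (hlam : 0 < lam) (hc0 : 0 ≤ c) (hcm : c ≤ mr) :
    Real.exp (-(lam * (2*c*(mr - c)))) ≤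
      Real.exp (-(lam*(mr-1)*c)) + Real.exp (-(lam*(mr-1)*(mr-c))) := by
  rcases le_or_gt (mr - 1) (2*(mr - c)) with h | h
  · have h1 : -(lam * (2*c*(mr-c))) ≤ -(lam*(mr-1)*c) := by
      nlinarith [mul_nonneg (mul_nonneg hlam.le hc0) (sub_nonneg.mpr h)]
    have h2 := Real.exp_le_exp.mpr h1
    nlinarith [Real.exp_pos (-(lam*(mr-1)*(mr-c)))]
  · have h2 : mr - 1 ≤ 2*c := by nlinarith
    have h3 : (0:ℝ) ≤ mr - c := by linarith
    have h1 : -(lam * (2*c*(mr-c))) ≤ -(lam*(mr-1)*(mr-c)) := by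
      nlinarith [mul_nonneg (mul_nonneg hlam.le h3) (sub_nonneg.mpr h2)]
    have h4 := Real.exp_le_exp.mpr h1
    nlinarith [Real.exp_pos (-(lam*(mr-1)*c))]

set_option maxHeartbeats 3200000 in
/-- For the building block of Ensemble 3, with high probability
all nodes within each clique take a common value. -/
theorem building_block_same_within_cliques {p m : ℕ} (lam : ℝ) (hlam : 0 < lam)
    (hm : 2 ≤ m) (hp : 2 * m ≤ p)
    (a b : Fin m → Fin p)
    (ha : Function.Injective a) (hb : Function.Injective b)
    (hab : ∀ k k', a k ≠ b k')
    (G : SimpleGraph (Fin p))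
    (hG : ∀ u w, G.Adj u w ↔
      (u ≠ w ∧ ((∃ k k', u = a k ∧ w = a k') ∨ (∃ k k', u = b k ∧ w = b k'))) ∨
      (∃ k, (u = a k ∧ w = b k) ∨ (u = b k ∧ w = a k))) :
    eventProb lam G
        {x | (∀ k k', x (a k) = x (a k')) ∧ (∀ k k', x (b k) = x (b k'))} ≥
      1 - 2 * (m : ℝ) ^ 2 / ((m : ℝ) + Real.exp (lam * ((m : ℝ) - 1) / 2)) := by
  classical
  -- ## adjacency structure
  have adj_aa : ∀ k k', G.Adj (a k) (a k') ↔ k ≠ k' := by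
    intro k k'
    rw [hG]
    constructor
    · rintro (⟨hne, _⟩ | ⟨k0, ⟨h1, h2⟩ | ⟨h1, h2⟩⟩)
      · exact fun h => hne (by rw [h])
      · exact absurd h2 (hab k' k0)
      · exact absurd h1 (hab k k0)
    · intro h
      exact Or.inl ⟨fun he => h (ha he), Or.inl ⟨k, k', rfl, rfl⟩⟩
  have adj_bb : ∀ k k', G.Adj (b k) (b k') ↔ k ≠ k' := by
    intro k k'
    rw [hG]
    constructor
    · rintro (⟨hne, _⟩ | ⟨k0, ⟨h1, h2⟩ | ⟨h1, h2⟩⟩)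
      · exact fun h => hne (by rw [h])
      · exact absurd h1.symm (hab k0 k)
      · exact absurd h2.symm (hab k0 k')
    · intro h
      exact Or.inl ⟨fun he => h (hb he), Or.inr ⟨k, k', rfl, rfl⟩⟩
  have adj_ab : ∀ k k', G.Adj (a k) (b k') ↔ k = k' := by
    intro k k'
    rw [hG]
    constructor
    · rintro (⟨hne, ⟨k1, k2, h1, h2⟩ | ⟨k1, k2, h1, h2⟩⟩ | ⟨k0, ⟨h1, h2⟩ | ⟨h1, h2⟩⟩)
      · exact absurd h2.symm (hab k2 k')
      · exact absurd h1 (hab k k1)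
      · rw [ha h1, hb h2]
      · exact absurd h1 (hab k k0)
    · rintro rfl
      exact Or.inr ⟨k, Or.inl ⟨rfl, rfl⟩⟩
  have adj_ba : ∀ k k', G.Adj (b k) (a k') ↔ k = k' := by
    intro k k'
    rw [hG]
    constructor
    · rintro (⟨hne, ⟨k1, k2, h1, h2⟩ | ⟨k1, k2, h1, h2⟩⟩ | ⟨k0, ⟨h1, h2⟩ | ⟨h1, h2⟩⟩)
      · exact absurd h1.symm (hab k1 k)
      · exact absurd h2 (hab k' k2)
      · exact absurd h1.symm (hab k0 k)
      · rw [hb h1, ha h2]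
    · rintro rfl
      exact Or.inr ⟨k, Or.inr ⟨rfl, rfl⟩⟩
  have adj_mem : ∀ i j : Fin p, G.Adj i j →
      ((∃ k, i = a k) ∨ (∃ k, i = b k)) ∧ ((∃ k, j = a k) ∨ (∃ k, j = b k)) := by
    intro i j hij
    rw [hG] at hij
    rcases hij with ⟨_, ⟨k1, k2, h1, h2⟩ | ⟨k1, k2, h1, h2⟩⟩ | ⟨k0, ⟨h1, h2⟩ | ⟨h1, h2⟩⟩
    · exact ⟨Or.inl ⟨k1, h1⟩, Or.inl ⟨k2, h2⟩⟩
    · exact ⟨Or.inr ⟨k1, h1⟩, Or.inr ⟨k2, h2⟩⟩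
    · exact ⟨Or.inl ⟨k0, h1⟩, Or.inr ⟨k0, h2⟩⟩
    · exact ⟨Or.inr ⟨k0, h1⟩, Or.inl ⟨k0, h2⟩⟩
  -- ## the pattern energy
  set En : (Fin m → Bool) → (Fin m → Bool) → ℝ := fun u v =>
    ((∑ k, confVal (u k))^2 + (∑ k, confVal (v k))^2)/2 - m
      + ∑ k, confVal (u k) * confVal (v k) with hEn_def
  -- ## energy formula
  have key_ne : ∀ w : Fin m → ℝ, (∀ k, w k * w k = 1) →
      (∑ k, ∑ k', if k ≠ k' then w k * w k' else 0) = (∑ k, w k)^2 - m := by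
    intro w hw
    have h : ∀ k k' : Fin m, (if k ≠ k' then w k * w k' else 0)
        = w k * w k' - (if k = k' then w k * w k' else 0) := by
      intro k k'; by_cases h : k = k' <;> simp [h]
    calc (∑ k, ∑ k', if k ≠ k' then w k * w k' else 0)
        = ∑ k, ((w k * ∑ k', w k') - 1) := by
          refine Finset.sum_congr rfl fun k _ => ?_
          rw [Finset.sum_congr rfl (fun k' _ => h k k'), Finset.sum_sub_distrib,
            ← Finset.mul_sum]
          congr 1
          rw [Finset.sum_ite_eq]
          simp [hw k]
      _ = (∑ k, w k)^2 - m := by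
          rw [Finset.sum_sub_distrib, ← Finset.sum_mul]
          simp [sq]
  have key_eq : ∀ w1 w2 : Fin m → ℝ,
      (∑ k, ∑ k', if k = k' then w1 k * w2 k' else 0) = ∑ k, w1 k * w2 k := by
    intro w1 w2
    refine Finset.sum_congr rfl fun k _ => ?_
    rw [Finset.sum_ite_eq]
    simp
  have henergy : ∀ x : Fin p → Bool, isingEnergy G x = En (x ∘ a) (x ∘ b) := by
    intro x
    set v : Fin p → ℝ := fun i => confVal (x i) with hv
    have hvsq : ∀ i, v i * v i = 1 := fun i => confVal_mul_self (x i)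
    set f : Fin p → Fin p → ℝ := fun i j => if G.Adj i j then v i * v j else 0 with hf
    set sA : Finset (Fin p) := Finset.univ.image a with hsA
    set sB : Finset (Fin p) := Finset.univ.image b with hsB
    have hdisj : Disjoint sA sB := by
      rw [Finset.disjoint_left]
      rintro i hiA hiB
      simp only [hsA, hsB, Finset.mem_image] at hiA hiB
      obtain ⟨k, _, rfl⟩ := hiA
      obtain ⟨k', _, h⟩ := hiB
      exact hab k k' h.symm
    have hmemo : ∀ i : Fin p, ((∃ k, i = a k) ∨ (∃ k, i = b k)) → i ∈ sA ∪ sB := by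
      rintro i (⟨k, rfl⟩ | ⟨k, rfl⟩)
      · exact Finset.mem_union_left _ (Finset.mem_image_of_mem a (Finset.mem_univ k))
      · exact Finset.mem_union_right _ (Finset.mem_image_of_mem b (Finset.mem_univ k))
    have hcol : ∀ i j, j ∉ sA ∪ sB → f i j = 0 := by
      intro i j hj
      simp only [hf]
      rw [if_neg]
      intro hadj
      exact hj (hmemo j (adj_mem i j hadj).2)
    have hrow : ∀ i, i ∉ sA ∪ sB → ∑ j, f i j = 0 := by
      intro i hi
      refine Finset.sum_eq_zero fun j _ => ?_
      simp only [hf]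
      rw [if_neg]
      intro hadj
      exact hi (hmemo i (adj_mem i j hadj).1)
    have hA : ∀ g : Fin p → ℝ, ∑ i ∈ sA, g i = ∑ k, g (a k) :=
      fun g => Finset.sum_image (fun x _ y _ h => ha h)
    have hB : ∀ g : Fin p → ℝ, ∑ i ∈ sB, g i = ∑ k, g (b k) :=
      fun g => Finset.sum_image (fun x _ y _ h => hb h)
    have h1 : ∑ i, ∑ j, f i j = ∑ i ∈ sA ∪ sB, ∑ j ∈ sA ∪ sB, f i j := by
      rw [← Finset.sum_subset (Finset.subset_univ (sA ∪ sB)) (fun i _ hi => hrow i hi)]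
      refine Finset.sum_congr rfl fun i _ => ?_
      rw [← Finset.sum_subset (Finset.subset_univ (sA ∪ sB)) (fun j _ hj => hcol i j hj)]
    have h2 : ∑ i ∈ sA ∪ sB, ∑ j ∈ sA ∪ sB, f i j
        = ((∑ k, ∑ k', f (a k) (a k')) + (∑ k, ∑ k', f (a k) (b k')))
          + ((∑ k, ∑ k', f (b k) (a k')) + (∑ k, ∑ k', f (b k) (b k'))) := by
      rw [Finset.sum_union hdisj, hA, hB]
      congr 1
      · rw [← Finset.sum_add_distrib]
        refine Finset.sum_congr rfl fun k _ => ?_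
        rw [Finset.sum_union hdisj, hA, hB]
      · rw [← Finset.sum_add_distrib]
        refine Finset.sum_congr rfl fun k _ => ?_
        rw [Finset.sum_union hdisj, hA, hB]
    have haa : (∑ k, ∑ k', f (a k) (a k')) = (∑ k, v (a k))^2 - m := by
      rw [← key_ne (fun k => v (a k)) (fun k => hvsq (a k))]
      refine Finset.sum_congr rfl fun k _ => Finset.sum_congr rfl fun k' _ => ?_
      simp only [hf]
      exact if_congr (adj_aa k k') rfl rfl
    have hbb : (∑ k, ∑ k', f (b k) (b k')) = (∑ k, v (b k))^2 - m := by
      rw [← key_ne (fun k => v (b k)) (fun k => hvsq (b k))]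
      refine Finset.sum_congr rfl fun k _ => Finset.sum_congr rfl fun k' _ => ?_
      simp only [hf]
      exact if_congr (adj_bb k k') rfl rfl
    have hab2 : (∑ k, ∑ k', f (a k) (b k')) = ∑ k, v (a k) * v (b k) := by
      rw [← key_eq (fun k => v (a k)) (fun k => v (b k))]
      refine Finset.sum_congr rfl fun k _ => Finset.sum_congr rfl fun k' _ => ?_
      simp only [hf]
      exact if_congr (adj_ab k k') rfl rfl
    have hba2 : (∑ k, ∑ k', f (b k) (a k')) = ∑ k, v (a k) * v (b k) := by
      have : (∑ k, ∑ k', f (b k) (a k')) = ∑ k, v (b k) * v (a k) := by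
        rw [← key_eq (fun k => v (b k)) (fun k => v (a k))]
        refine Finset.sum_congr rfl fun k _ => Finset.sum_congr rfl fun k' _ => ?_
        simp only [hf]
        exact if_congr (adj_ba k k') rfl rfl
      rw [this]
      exact Finset.sum_congr rfl fun k _ => mul_comm _ _
    show (1/2 : ℝ) * ∑ i, ∑ j, f i j = _
    rw [h1, h2, haa, hbb, hab2, hba2, hEn_def]
    simp only [Function.comp]
    ring
  -- ## basic quantities
  set Z : ℝ := isingZ lam G with hZdef
  have hZpos : 0 < Z := Finset.sum_pos (fun x _ => Real.exp_pos _) Finset.univ_nonempty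
  set w : (Fin p → Bool) → ℝ := fun x => Real.exp (lam * isingEnergy G x) with hwdef
  set bad : (Fin p → Bool) → Prop := fun x =>
    ¬((∀ k k', x (a k) = x (a k')) ∧ (∀ k k', x (b k) = x (b k'))) with hbad_def
  set Pbad : ℝ := ∑ x, if bad x then isingP lam G x else 0 with hPbad_def
  have hsum1 : ∑ x, isingP lam G x = 1 := by
    simp only [isingP]
    rw [← Finset.sum_div]
    exact div_self hZpos.ne'
  have hPnonneg : ∀ x, 0 ≤ isingP lam G x :=
    fun x => div_nonneg (Real.exp_pos _).le hZpos.le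
  have hevent : eventProb lam G
      {x | (∀ k k', x (a k) = x (a k')) ∧ (∀ k k', x (b k) = x (b k'))} = 1 - Pbad := by
    rw [eventProb, hPbad_def, ← hsum1, ← Finset.sum_sub_distrib]
    refine Finset.sum_congr rfl fun x _ => ?_
    simp only [Set.mem_setOf_eq]
    by_cases h : (∀ k k', x (a k) = x (a k')) ∧ (∀ k k', x (b k) = x (b k'))
    · rw [if_pos h, if_neg (show ¬bad x from not_not_intro h), sub_zero]
    · rw [if_neg h, if_pos (show bad x from h), sub_self]
  rw [hevent]
  -- it suffices to bound Pbad
  set E : ℝ := Real.exp (lam * ((m : ℝ) - 1) / 2) with hEdef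
  have hEpos : 0 < E := Real.exp_pos _
  have hmE : (0:ℝ) < (m:ℝ) + E := by positivity
  suffices hP : Pbad ≤ 2 * (m : ℝ) ^ 2 / ((m : ℝ) + E) by linarith
  have hPbad_le_one : Pbad ≤ 1 := by
    rw [hPbad_def, ← hsum1]
    refine Finset.sum_le_sum fun x _ => ?_
    by_cases h : bad x
    · rw [if_pos h]
    · rw [if_neg h]; exact hPnonneg x
  -- trivial case
  rcases le_or_gt ((m:ℝ) + E) (2 * (m:ℝ)^2) with hcase | hcase
  · calc Pbad ≤ 1 := hPbad_le_one
      _ ≤ 2 * (m : ℝ) ^ 2 / ((m : ℝ) + E) := by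
          rw [le_div_iff₀ hmE]; linarith
  -- main case
  -- ### the injection bound : Pbad ≤ SB
  set SB : ℝ := ∑ uv : (Fin m → Bool) × (Fin m → Bool),
    if ¬((∀ k k', uv.1 k = uv.1 k') ∧ (∀ k k', uv.2 k = uv.2 k'))
    then Real.exp (lam * (En uv.1 uv.2 - (m:ℝ)^2)) else 0 with hSB_def
  have hPbadSB : Pbad ≤ SB := by
    set τ : (Fin p → Bool) → (Fin p → Bool) :=
      fun x i => if (∃ k, i = a k ∨ i = b k) then true else x i with hτdef
    set Ψ : (Fin p → Bool) → ((Fin p → Bool) × ((Fin m → Bool) × (Fin m → Bool))) :=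
      fun x => (τ x, (x ∘ a, x ∘ b)) with hΨdef
    have hτa : ∀ x k, τ x (a k) = true := by
      intro x k; simp only [hτdef]; rw [if_pos ⟨k, Or.inl rfl⟩]
    have hτb : ∀ x k, τ x (b k) = true := by
      intro x k; simp only [hτdef]; rw [if_pos ⟨k, Or.inr rfl⟩]
    have hΨinj : Function.Injective Ψ := by
      intro x y hxy
      simp only [hΨdef, Prod.mk.injEq] at hxy
      obtain ⟨h1, h2, h3⟩ := hxy
      funext i
      by_cases hi : (∃ k, i = a k ∨ i = b k)
      · obtain ⟨k, hk | hk⟩ := hi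
        · rw [hk]; exact congrFun h2 k
        · rw [hk]; exact congrFun h3 k
      · have h4 := congrFun h1 i
        simp only [hτdef] at h4
        rwa [if_neg hi, if_neg hi] at h4
    have hEtau : ∀ x, isingEnergy G (τ x) = (m:ℝ)^2 := by
      intro x
      rw [henergy]
      have h1 : (τ x) ∘ a = fun _ => true := funext fun k => hτa x k
      have h2 : (τ x) ∘ b = fun _ => true := funext fun k => hτb x k
      rw [h1, h2, hEn_def]
      simp [confVal]
    set Fz : ((Fin p → Bool) × ((Fin m → Bool) × (Fin m → Bool))) → ℝ := fun z =>
      (if ¬((∀ k k', z.2.1 k = z.2.1 k') ∧ (∀ k k', z.2.2 k = z.2.2 k'))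
        then Real.exp (lam * (En z.2.1 z.2.2 - (m:ℝ)^2)) else 0) * w z.1 with hFzdef
    have hFznn : ∀ z, 0 ≤ Fz z := by
      intro z
      simp only [hFzdef, hwdef]
      refine mul_nonneg ?_ (Real.exp_pos _).le
      split
      · exact (Real.exp_pos _).le
      · exact le_refl 0
    have hpt : ∀ x, (if bad x then w x else 0) = Fz (Ψ x) := by
      intro x
      simp only [hFzdef, hΨdef]
      by_cases hbx : bad x
      · rw [if_pos hbx,
          if_pos (show ¬((∀ k k', (x ∘ a) k = (x ∘ a) k') ∧ (∀ k k', (x ∘ b) k = (x ∘ b) k'))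
            from hbx)]
        simp only [hwdef]
        rw [hEtau, ← Real.exp_add, henergy x]
        congr 1
        ring
      · rw [if_neg hbx,
          if_neg (show ¬¬((∀ k k', (x ∘ a) k = (x ∘ a) k') ∧ (∀ k k', (x ∘ b) k = (x ∘ b) k'))
            from not_not_intro (not_not.mp hbx)), zero_mul]
    have hZw : ∑ y, w y = Z := rfl
    have hkey : (∑ x, if bad x then w x else 0) ≤ SB * Z := by
      calc (∑ x, if bad x then w x else 0) = ∑ x, Fz (Ψ x) :=
            Finset.sum_congr rfl (fun x _ => hpt x)
        _ = ∑ z ∈ Finset.univ.image Ψ, Fz z :=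
            (Finset.sum_image (fun x _ y _ h => hΨinj h)).symm
        _ ≤ ∑ z, Fz z :=
            Finset.sum_le_sum_of_subset_of_nonneg (Finset.subset_univ _) (fun z _ _ => hFznn z)
        _ = SB * Z := by
            rw [Fintype.sum_prod_type]
            simp only [hFzdef]
            rw [← hZw]
            rw [Finset.sum_comm]
            rw [← Finset.sum_mul_sum]
    have hPbad_eq : Pbad = (∑ x, if bad x then w x else 0) / Z := by
      rw [hPbad_def, Finset.sum_div]
      refine Finset.sum_congr rfl fun x _ => ?_
      by_cases h : bad x
      · rw [if_pos h, if_pos h]; rfl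
      · rw [if_neg h, if_neg h, zero_div]
    rw [hPbad_eq, div_le_iff₀ hZpos]
    exact hkey
  -- ### bounding SB by pattern sums
  have hm2 : (2:ℝ) ≤ (m:ℝ) := by exact_mod_cast hm
  set q : ℝ := Real.exp (-(lam * ((m:ℝ) - 1))) with hqdef
  have hq0 : 0 < q := Real.exp_pos _
  have hq1 : q ≤ 1 := by
    have h0 : -(lam * ((m:ℝ) - 1)) ≤ 0 := by nlinarith
    calc q = Real.exp (-(lam * ((m:ℝ) - 1))) := hqdef
      _ ≤ Real.exp 0 := Real.exp_le_exp.mpr h0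
      _ = 1 := Real.exp_zero
  have hqE2 : q * E^2 = 1 := by
    rw [hqdef, hEdef, sq, ← Real.exp_add, ← Real.exp_add,
      show -(lam * ((m:ℝ)-1)) + (lam * ((m:ℝ)-1)/2 + lam*((m:ℝ)-1)/2) = 0 by ring,
      Real.exp_zero]
  have hqpow : ∀ u : Fin m → Bool, q ^ cnt u
      = Real.exp (-(lam*((m:ℝ)-1) * (cnt u : ℝ))) := by
    intro u
    rw [hqdef, ← Real.exp_nat_mul]
    congr 1
    ring
  have hqpow' : ∀ u : Fin m → Bool, q ^ (m - cnt u)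
      = Real.exp (-(lam*((m:ℝ)-1) * ((m:ℝ) - (cnt u:ℝ)))) := by
    intro u
    rw [hqdef, ← Real.exp_nat_mul]
    congr 1
    push_cast [cnt_le u]
    ring
  set eD : (Fin m → Bool) → ℝ :=
    fun u => Real.exp (-(lam * (2*(cnt u:ℝ)*((m:ℝ)-(cnt u:ℝ))))) with heDdef
  have hdle : ∀ u : Fin m → Bool, eD u ≤ q ^ cnt u + q ^ (m - cnt u) := by
    intro u
    rw [heDdef, hqpow, hqpow']
    exact exp_d_le lam (m:ℝ) (cnt u) hlam (Nat.cast_nonneg _) (by exact_mod_cast cnt_le u)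
  have hEnle : ∀ u v : Fin m → Bool,
      Real.exp (lam * (En u v - (m:ℝ)^2)) ≤ eD u * eD v := by
    intro u v
    rw [heDdef, ← Real.exp_add]
    apply Real.exp_le_exp.mpr
    have hSu := sum_confVal u
    have hSv := sum_confVal v
    have hMle : (∑ k, confVal (u k) * confVal (v k)) ≤ (m:ℝ) := by
      calc (∑ k, confVal (u k) * confVal (v k)) ≤ ∑ _k : Fin m, (1:ℝ) :=
          Finset.sum_le_sum fun k _ => confVal_mul_le_one _ _
        _ = m := by simp
    have hgoal : En u v - (m:ℝ)^2
        ≤ -(2*(cnt u:ℝ)*((m:ℝ)-(cnt u:ℝ))) - (2*(cnt v:ℝ)*((m:ℝ)-(cnt v:ℝ))) := by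
      simp only [hEn_def]
      rw [hSu, hSv]
      nlinarith [hMle]
    nlinarith [mul_le_mul_of_nonneg_left hgoal hlam.le]
  set Cu : (Fin m → Bool) → Prop := fun u => ∀ k k', u k = u k' with hCudef
  set U : ℝ := ∑ u, if ¬ Cu u then eD u else 0 with hUdef
  set V : ℝ := ∑ u, eD u with hVdef
  have hU0 : 0 ≤ U := by
    rw [hUdef]
    refine Finset.sum_nonneg fun u _ => ?_
    split
    · exact (Real.exp_pos _).le
    · exact le_refl 0
  have hV0 : 0 ≤ V := Finset.sum_nonneg fun u _ => (Real.exp_pos _).le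
  have hSB2 : SB ≤ U * V + V * U := by
    have hnn1 : ∀ u v : Fin m → Bool, (0:ℝ) ≤ (if ¬ Cu u then eD u else 0) * eD v := by
      intro u v
      refine mul_nonneg ?_ (Real.exp_pos _).le
      split
      · exact (Real.exp_pos _).le
      · exact le_refl 0
    have hnn2 : ∀ u v : Fin m → Bool, (0:ℝ) ≤ eD u * (if ¬ Cu v then eD v else 0) := by
      intro u v
      refine mul_nonneg (Real.exp_pos _).le ?_
      split
      · exact (Real.exp_pos _).le
      · exact le_refl 0
    have hptw : ∀ uv : (Fin m → Bool) × (Fin m → Bool),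
        (if ¬((∀ k k', uv.1 k = uv.1 k') ∧ (∀ k k', uv.2 k = uv.2 k'))
          then Real.exp (lam * (En uv.1 uv.2 - (m:ℝ)^2)) else 0)
        ≤ (if ¬ Cu uv.1 then eD uv.1 else 0) * eD uv.2
          + eD uv.1 * (if ¬ Cu uv.2 then eD uv.2 else 0) := by
      intro uv
      by_cases hbad : ¬(Cu uv.1 ∧ Cu uv.2)
      · rw [if_pos (show ¬((∀ k k', uv.1 k = uv.1 k') ∧ (∀ k k', uv.2 k = uv.2 k'))
          from hbad)]
        rcases not_and_or.mp hbad with h | h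
        · rw [if_pos h]
          linarith [hEnle uv.1 uv.2, hnn2 uv.1 uv.2]
        · rw [if_pos h]
          linarith [hEnle uv.1 uv.2, hnn1 uv.1 uv.2]
      · rw [if_neg (show ¬¬((∀ k k', uv.1 k = uv.1 k') ∧ (∀ k k', uv.2 k = uv.2 k'))
          from not_not_intro (not_not.mp hbad))]
        linarith [hnn1 uv.1 uv.2, hnn2 uv.1 uv.2]
    have hfact : ∀ (f g : (Fin m → Bool) → ℝ),
        (∑ uv : (Fin m → Bool) × (Fin m → Bool), f uv.1 * g uv.2)
          = (∑ u, f u) * (∑ u, g u) := by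
      intro f g
      rw [Finset.sum_mul_sum]
      rw [Fintype.sum_prod_type]
    have hstep : SB ≤ ∑ uv : (Fin m → Bool) × (Fin m → Bool),
        ((if ¬ Cu uv.1 then eD uv.1 else 0) * eD uv.2
          + eD uv.1 * (if ¬ Cu uv.2 then eD uv.2 else 0)) := by
      rw [hSB_def]
      exact Finset.sum_le_sum fun uv _ => hptw uv
    have hstep2 : (∑ uv : (Fin m → Bool) × (Fin m → Bool),
        ((if ¬ Cu uv.1 then eD uv.1 else 0) * eD uv.2
          + eD uv.1 * (if ¬ Cu uv.2 then eD uv.2 else 0)))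
        = U * V + V * U := by
      rw [Finset.sum_add_distrib,
        hfact (fun u => if ¬ Cu u then eD u else 0) eD,
        hfact eD (fun u => if ¬ Cu u then eD u else 0), hUdef, hVdef]
    linarith [hstep, hstep2.le, hstep2.ge]
  -- the binomial-type sums
  have hsum_q : (∑ u : Fin m → Bool, q ^ cnt u) = (1+q)^m := by
    calc (∑ u : Fin m → Bool, q ^ cnt u)
        = ∑ u : Fin m → Bool, ∏ k, (if u k then q else 1) :=
          Finset.sum_congr rfl fun u _ => (prod_q_cnt q u).symm
      _ = ((if true then q else 1) + (if false then q else 1))^m :=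
          sum_fun_bool_prod m (fun b => if b then q else 1)
      _ = (1+q)^m := by norm_num [add_comm]
  have hsum_q' : (∑ u : Fin m → Bool, q ^ (m - cnt u)) = (1+q)^m := by
    calc (∑ u : Fin m → Bool, q ^ (m - cnt u))
        = ∑ u : Fin m → Bool, ∏ k, (if u k then 1 else q) :=
          Finset.sum_congr rfl fun u _ => (prod_q_cnt' q u).symm
      _ = ((if true then 1 else q) + (if false then 1 else q))^m :=
          sum_fun_bool_prod m (fun b => if b then 1 else q)
      _ = (1+q)^m := by norm_num
  set P1 : ℝ := (1+q)^m with hP1def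
  have hA : (∑ u, if ¬ Cu u then q ^ cnt u else 0) ≤ P1 - 1 := by
    have hpt : ∀ u : Fin m → Bool, (if ¬ Cu u then q ^ cnt u else 0)
        ≤ q ^ cnt u - (if u = (fun _ => false) then 1 else 0) := by
      intro u
      by_cases hu : u = (fun _ => false)
      · subst hu
        rw [if_neg (not_not_intro (show Cu (fun _ : Fin m => false) from fun _ _ => rfl)),
          if_pos rfl, cnt_false]
        norm_num
      · rw [if_neg hu, sub_zero]
        by_cases hc : ¬ Cu u
        · rw [if_pos hc]
        · rw [if_neg hc]
          positivity
    calc (∑ u, if ¬ Cu u then q ^ cnt u else 0)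
        ≤ ∑ u : Fin m → Bool, (q ^ cnt u - if u = (fun _ => false) then 1 else 0) :=
          Finset.sum_le_sum fun u _ => hpt u
      _ = P1 - 1 := by
          rw [Finset.sum_sub_distrib, hsum_q, hP1def]
          congr 1
          simp
  have hB : (∑ u, if ¬ Cu u then q ^ (m - cnt u) else 0) ≤ P1 - 1 := by
    have hpt : ∀ u : Fin m → Bool, (if ¬ Cu u then q ^ (m - cnt u) else 0)
        ≤ q ^ (m - cnt u) - (if u = (fun _ => true) then 1 else 0) := by
      intro u
      by_cases hu : u = (fun _ => true)
      · subst hu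
        rw [if_neg (not_not_intro (show Cu (fun _ : Fin m => true) from fun _ _ => rfl)),
          if_pos rfl, cnt_true]
        norm_num
      · rw [if_neg hu, sub_zero]
        by_cases hc : ¬ Cu u
        · rw [if_pos hc]
        · rw [if_neg hc]
          positivity
    calc (∑ u, if ¬ Cu u then q ^ (m - cnt u) else 0)
        ≤ ∑ u : Fin m → Bool, (q ^ (m - cnt u) - if u = (fun _ => true) then 1 else 0) :=
          Finset.sum_le_sum fun u _ => hpt u
      _ = P1 - 1 := by
          rw [Finset.sum_sub_distrib, hsum_q', hP1def]
          congr 1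
          simp
  have hUb : U ≤ 2*(P1 - 1) := by
    rw [hUdef]
    calc (∑ u, if ¬ Cu u then eD u else 0)
        ≤ ∑ u : Fin m → Bool, ((if ¬ Cu u then q ^ cnt u else 0)
            + (if ¬ Cu u then q ^ (m - cnt u) else 0)) := by
          refine Finset.sum_le_sum fun u _ => ?_
          by_cases hc : ¬ Cu u
          · rw [if_pos hc, if_pos hc, if_pos hc]
            exact hdle u
          · rw [if_neg hc, if_neg hc, if_neg hc]
            norm_num
      _ = (∑ u, if ¬ Cu u then q ^ cnt u else 0)
            + (∑ u, if ¬ Cu u then q ^ (m - cnt u) else 0) := Finset.sum_add_distrib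
      _ ≤ (P1 - 1) + (P1 - 1) := add_le_add hA hB
      _ = 2*(P1 - 1) := by ring
  have hVb : V ≤ 2*P1 := by
    rw [hVdef]
    calc (∑ u, eD u) ≤ ∑ u : Fin m → Bool, (q ^ cnt u + q ^ (m - cnt u)) :=
          Finset.sum_le_sum fun u _ => hdle u
      _ = 2*P1 := by rw [Finset.sum_add_distrib, hsum_q, hsum_q', hP1def]; ring
  -- ### numerical endgame
  have hP1ge1 : 1 ≤ P1 := by
    rw [hP1def]
    exact one_le_pow₀ (by linarith)
  have hEgt : (m:ℝ)*(2*(m:ℝ)-1) < E := by nlinarith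
  have hE2pos : 0 < E^2 := by positivity
  have hmm0 : (0:ℝ) ≤ (m:ℝ)*(2*(m:ℝ)-1) := by nlinarith
  have hE2 : ((m:ℝ)*(2*(m:ℝ)-1))^2 ≤ E^2 := by
    nlinarith [mul_self_le_mul_self hmm0 hEgt.le]
  have hmqE : (m:ℝ)*q*E^2 = m := by rw [mul_assoc, hqE2, mul_one]
  have hmq : (m:ℝ)*q ≤ 1/18 := by
    have hkey : 18*(m:ℝ) ≤ E^2 := by
      nlinarith [hE2, mul_nonneg (mul_nonneg (by positivity : (0:ℝ) ≤ (m:ℝ))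
        (sub_nonneg.mpr hm2)) (by positivity : (0:ℝ) ≤ 4*(m:ℝ)^2+4*(m:ℝ)+9)]
    have h2 : (m:ℝ)*q*E^2 ≤ (1/18)*E^2 := by nlinarith
    exact (mul_le_mul_iff_of_pos_right hE2pos).mp h2
  have hmq0 : (0:ℝ) ≤ (m:ℝ)*q := by positivity
  have hBern : 1 - (m:ℝ)*q ≤ (1-q)^m := by
    have h := one_add_mul_le_pow (a := -q) (by linarith : (-2:ℝ) ≤ -q) m
    calc 1 - (m:ℝ)*q = 1 + (m:ℝ)*(-q) := by ring
      _ ≤ (1 + -q)^m := h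
      _ = (1-q)^m := by ring_nf
  have hmulP : P1 * (1 - (m:ℝ)*q) ≤ 1 := by
    calc P1 * (1 - (m:ℝ)*q) ≤ P1 * (1-q)^m :=
          mul_le_mul_of_nonneg_left hBern (by positivity)
      _ = ((1+q)*(1-q))^m := by rw [hP1def, ← mul_pow]
      _ = (1-q^2)^m := by ring_nf
      _ ≤ 1 := pow_le_one₀ (by nlinarith) (by nlinarith)
  have hP1le : P1 ≤ 18/17 := by
    nlinarith [mul_le_mul_of_nonneg_left hmq (by linarith : (0:ℝ) ≤ P1)]
  have hP1sub : P1 - 1 ≤ (18/17) * ((m:ℝ)*q) := by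
    nlinarith [mul_le_mul_of_nonneg_right hP1le hmq0]
  have h9 : 9*((m:ℝ)*q) ≤ 2*(m:ℝ)^2/((m:ℝ)+E) := by
    rw [le_div_iff₀ hmE]
    have h3m : 3*(m:ℝ) ≤ E := by nlinarith
    have h5 : q*E*(3*(m:ℝ)) ≤ q*E*E :=
      mul_le_mul_of_nonneg_left h3m (by positivity)
    have h6 : q*E*E = 1 := by
      rw [show q*E*E = q*E^2 by ring, hqE2]
    nlinarith [mul_le_mul_of_nonneg_left hmq (by positivity : (0:ℝ) ≤ 9*(m:ℝ))]
  calc Pbad ≤ SB := hPbadSB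
    _ ≤ U*V + V*U := hSB2
    _ ≤ 9*((m:ℝ)*q) := by
        have hc1 : U*V ≤ (2*(P1-1))*(2*P1) :=
          mul_le_mul hUb hVb hV0 (by nlinarith)
        have hc2 : (P1-1)*P1 ≤ ((18/17)*((m:ℝ)*q))*(18/17) :=
          mul_le_mul hP1sub hP1le (by linarith) (by positivity)
        nlinarith
    _ ≤ 2*(m:ℝ)^2/((m:ℝ)+E) := h9

end
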